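/- Let α be a linear order, m ≥ 1, X : Fin (5*m) → α, and let (t_i)_{i<m} be a family of group medians for X. Suppose x : α satisfies |{i < m : t_i ≤ x}| ≥ ⌈m/2⌉ and |{i < m : x ≤ t_i}| ≥ ⌈m/2⌉. Let Y : Fin (5*m) → α be an array differing from X in at most β positions (a corrupted copy of X). Then 3·⌈m/2⌉ − β ≤ (|{j : Y j ≤ x}| : ℤ) and (|{j : Y j < x}| : ℤ) ≤ 5m − 3·⌈m/2⌉ + β. (This is the combinatorial core of the claim that, after at most β corruptions, an uncorrupted median of medians still has rank between roughly 3n/10 − β and 7n/10 + β.) -/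

import Mathlib

/-- The `i`-th group of indices of an array of size `5 * m`:
the indices `5i, 5i+1, 5i+2, 5i+3, 5i+4`. -/
def group (m : ℕ) (i : Fin m) : Finset (Fin (5 * m)) :=
  Finset.univ.filter fun j => 5 * (i : ℕ) ≤ (j : ℕ) ∧ (j : ℕ) < 5 * (i : ℕ) + 5

/-- `t` is a median of group `i` of `X`: at least `3` elements of the group are `≤ t`
and at least `3` elements of the group are `≥ t`. -/
def IsGroupMedian {α : Type*} [LinearOrder α] {m : ℕ}
    (X : Fin (5 * m) → α) (i : Fin m) (t : α) : Prop :=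
  3 ≤ ((group m i).filter fun j => X j ≤ t).card ∧
  3 ≤ ((group m i).filter fun j => t ≤ X j).card

lemma group_disjoint {m : ℕ} {i i' : Fin m} (h : i ≠ i') :
    Disjoint (group m i) (group m i') := by
  rw [Finset.disjoint_left]
  intro j hj hj'
  simp only [group, Finset.mem_filter] at hj hj'
  exact h (Fin.ext (by omega))

lemma count_ge {α : Type*} [LinearOrder α] {m : ℕ} (X : Fin (5 * m) → α)
    (P : Fin (5 * m) → Prop) [DecidablePred P]
    (S : Finset (Fin m))
    (h : ∀ i ∈ S, 3 ≤ ((group m i).filter P).card) :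
    3 * S.card ≤ (Finset.univ.filter P).card := by
  calc 3 * S.card = S.card • 3 := by rw [smul_eq_mul, mul_comm]
    _ ≤ ∑ i ∈ S, ((group m i).filter P).card := Finset.card_nsmul_le_sum S _ 3 h
    _ = (S.biUnion fun i => (group m i).filter P).card := by
        rw [Finset.card_biUnion]
        intro i hi i' hi' hne
        exact Finset.disjoint_filter_filter (group_disjoint hne)
    _ ≤ (Finset.univ.filter P).card := by
        apply Finset.card_le_card
        intro j hj
        simp only [Finset.mem_biUnion, Finset.mem_filter] at hj ⊢
        obtain ⟨i, _, _, hp⟩ := hj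
        exact ⟨Finset.mem_univ j, hp⟩

/-- After at most `β` corruptions, an uncorrupted median of medians still has rank
between roughly `3n/10 - β` and `7n/10 + β` in the corrupted array `Y`. -/
theorem median_of_medians_rank_corrupted {α : Type*} [LinearOrder α] {m : ℕ} (hm : 1 ≤ m)
    (X : Fin (5 * m) → α) (t : Fin m → α)
    (ht : ∀ i : Fin m, IsGroupMedian X i (t i)) (x : α)
    (hle : (m + 1) / 2 ≤ (Finset.univ.filter fun i : Fin m => t i ≤ x).card)
    (hge : (m + 1) / 2 ≤ (Finset.univ.filter fun i : Fin m => x ≤ t i).card)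
    (Y : Fin (5 * m) → α) (β : ℕ)
    (hY : (Finset.univ.filter fun i : Fin (5 * m) => X i ≠ Y i).card ≤ β) :
    (3 * ((m + 1) / 2) : ℤ) - β ≤
        ((Finset.univ.filter fun j : Fin (5 * m) => Y j ≤ x).card : ℤ) ∧
    ((Finset.univ.filter fun j : Fin (5 * m) => Y j < x).card : ℤ) ≤
        5 * m - 3 * ((m + 1) / 2 : ℕ) + β := by
  set B : Finset (Fin (5 * m)) := Finset.univ.filter fun i => X i ≠ Y i with hB
  -- counts for the uncorrupted X
  have h1 : 3 * ((m + 1) / 2) ≤ (Finset.univ.filter fun j => X j ≤ x).card := by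
    refine le_trans ?_ (count_ge X _ (Finset.univ.filter fun i : Fin m => t i ≤ x) ?_)
    · exact Nat.mul_le_mul_left 3 hle
    · intro i hi
      simp only [Finset.mem_filter] at hi
      refine le_trans (ht i).1 (Finset.card_le_card ?_)
      exact Finset.monotone_filter_right _ (fun j _ hj => le_trans hj hi.2)
  have h2 : 3 * ((m + 1) / 2) ≤ (Finset.univ.filter fun j => x ≤ X j).card := by
    refine le_trans ?_ (count_ge X _ (Finset.univ.filter fun i : Fin m => x ≤ t i) ?_)
    · exact Nat.mul_le_mul_left 3 hge
    · intro i hi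
      simp only [Finset.mem_filter] at hi
      refine le_trans (ht i).2 (Finset.card_le_card ?_)
      exact Finset.monotone_filter_right _ (fun j _ hj => le_trans hi.2 hj)
  -- complement count
  have hcompl : (Finset.univ.filter fun j : Fin (5 * m) => X j < x).card
      + (Finset.univ.filter fun j : Fin (5 * m) => x ≤ X j).card = 5 * m := by
    have := Finset.card_filter_add_card_filter_not
      (s := (Finset.univ : Finset (Fin (5 * m)))) (p := fun j => X j < x)
    simp only [not_lt, Finset.card_univ, Fintype.card_fin] at this
    exact this
  constructor
  · -- lower bound
    have hsub : (Finset.univ.filter fun j : Fin (5 * m) => X j ≤ x) \ B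
        ⊆ Finset.univ.filter fun j : Fin (5 * m) => Y j ≤ x := by
      intro j hj
      simp only [hB, Finset.mem_sdiff, Finset.mem_filter, Finset.mem_univ, true_and,
        not_not] at hj ⊢
      exact hj.2 ▸ hj.1
    have := Finset.card_le_card hsub
    have hsd : (Finset.univ.filter fun j : Fin (5 * m) => X j ≤ x).card - B.card
        ≤ ((Finset.univ.filter fun j : Fin (5 * m) => X j ≤ x) \ B).card :=
      Finset.le_card_sdiff _ _
    omega
  · -- upper bound
    have hsub : (Finset.univ.filter fun j : Fin (5 * m) => Y j < x)
        ⊆ (Finset.univ.filter fun j : Fin (5 * m) => X j < x) ∪ B := by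
      intro j hj
      simp only [hB, Finset.mem_union, Finset.mem_filter, Finset.mem_univ, true_and] at hj ⊢
      by_cases hxy : X j = Y j
      · exact Or.inl (hxy ▸ hj)
      · exact Or.inr hxy
    have := (Finset.card_le_card hsub).trans (Finset.card_union_le _ _)
    omega
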